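/- Let E = ⋃_{n∈ℕ} E_n be the union of an increasing sequence of complex normed spaces with inclusion bonding maps of operator norm at most 1, equipped with the Hausdorff locally convex direct limit topology, and let F be a complex Banach space. Fix R > 0 and U := ⋃_n B_R^{E_n}(0). Let f : U → F satisfy f(0) = 0, and suppose each f_n := f|_{B_R^{E_n}(0)} is complex analytic and bounded. Then f is continuous at 0: for every ε > 0 there is a sequence (δ_n) of positive reals such that f maps V(δ₁, δ₂, …) := ⋃_m (B_{δ₁}^{E_1}(0) + ⋯ + B_{δ_m}^{E_m}(0)) into B_ε^F(0), and V(δ₁, δ₂, …) ⊆ U. -/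

import Mathlib

open Metric

/-- Continuity core of Theorem A.  Let `E` be a complex vector space which is the union of
an increasing sequence of normed spaces `X n` (realized by injective linear maps
`u n : X n → E` compatible with bonding maps `j n` of operator norm at most `1`), let
`U := ⋃ₙ uₙ(B_R(0))`, and let `f : U → F` (into a Banach space) with `f 0 = 0` restrict to
a bounded complex analytic map on each ball `B_R(0) ⊆ X n`.  Then for every `ε > 0` there
is a sequence `δ` of positive reals such that the basic `0`-neighborhood
`V(δ₁, δ₂, …) = ⋃ₘ (B_{δ₁} + ⋯ + B_{δₘ})` is contained in `U` and mapped by `f`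
into the `ε`-ball of `F`. -/
theorem stmt15 {F : Type*} [NormedAddCommGroup F] [NormedSpace ℂ F] [CompleteSpace F]
    {E : Type*} [AddCommGroup E] [Module ℂ E]
    (X : ℕ → Type*) [∀ n, NormedAddCommGroup (X n)] [∀ n, NormedSpace ℂ (X n)]
    (u : ∀ n, X n →ₗ[ℂ] E) (huinj : ∀ n, Function.Injective (u n))
    (j : ∀ n, X n →ₗ[ℂ] X (n + 1)) (hj : ∀ n (x : X n), ‖j n x‖ ≤ ‖x‖)
    (hcomp : ∀ n (x : X n), u (n + 1) (j n x) = u n x)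
    (hunion : ∀ x : E, ∃ n, x ∈ Set.range (u n))
    (R : ℝ) (hR : 0 < R)
    (f : E → F) (hf0 : f 0 = 0)
    (hanal : ∀ n, AnalyticOnNhd ℂ (fun y : X n => f (u n y)) (ball 0 R))
    (hbdd : ∀ n, ∃ C, ∀ y ∈ ball (0 : X n) R, ‖f (u n y)‖ ≤ C)
    (ε : ℝ) (hε : 0 < ε) :
    ∃ δ : ℕ → ℝ, (∀ i, 0 < δ i) ∧
      ∀ x : E,
        (∃ (m : ℕ) (w : (i : Fin m) → X i.val),
            (∀ i, ‖w i‖ < δ i.val) ∧ x = ∑ i, u i.val (w i)) →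
        (∃ n, ∃ y : X n, ‖y‖ < R ∧ x = u n y) ∧ ‖f x‖ < ε := by
  classical
  -- lifting a single vector along the bonding maps
  have lift : ∀ (i n : ℕ), i ≤ n → ∀ x : X i, ∃ y : X n, u n y = u i x ∧ ‖y‖ ≤ ‖x‖ := by
    intro i n hin
    induction hin with
    | refl => intro x; exact ⟨x, rfl, le_rfl⟩
    | step h ih =>
      intro x
      obtain ⟨y, hy, hny⟩ := ih x
      exact ⟨j _ y, by rw [hcomp]; exact hy, (hj _ y).trans hny⟩
  -- lifting a finite sum
  have liftSum : ∀ (m : ℕ) (w : (i : Fin m) → X i.val),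
      ∃ y : X m, u m y = ∑ i, u i.val (w i) ∧ ‖y‖ ≤ ∑ i, ‖w i‖ := by
    intro m
    induction m with
    | zero => intro w; exact ⟨0, by simp, by simp⟩
    | succ m ih =>
      intro w
      obtain ⟨y₀, hy₀, hny₀⟩ := ih (fun i => w i.castSucc)
      obtain ⟨y₁, hy₁, hny₁⟩ := lift m (m + 1) (Nat.le_succ m) y₀
      obtain ⟨y₂, hy₂, hny₂⟩ := lift m (m + 1) (Nat.le_succ m) (w (Fin.last m))
      refine ⟨y₁ + y₂, ?_, ?_⟩
      · rw [map_add, hy₁, hy₂, hy₀, Fin.sum_univ_castSucc]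
        rfl
      · calc ‖y₁ + y₂‖ ≤ ‖y₁‖ + ‖y₂‖ := norm_add_le _ _
          _ ≤ (∑ i : Fin m, ‖w i.castSucc‖) + ‖w (Fin.last m)‖ :=
              add_le_add (hny₁.trans hny₀) hny₂
          _ = ∑ i, ‖w i‖ := (Fin.sum_univ_castSucc (fun i : Fin (m+1) => ‖w i‖)).symm
  choose C hC using hbdd
  have hC0 : ∀ n, 0 ≤ C n := by
    intro n
    have h := hC n 0 (by simpa using hR)
    rw [map_zero, hf0] at h
    simpa using h
  set δ : ℕ → ℝ := fun n => min (R / 2 ^ (n + 3)) (ε * R / (2 ^ (n + 3) * (2 * C n + 1)))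
    with hδdef
  have hδpos : ∀ n, 0 < δ n := by
    intro n
    have := hC0 n
    have h1 : (0:ℝ) < R / 2 ^ (n + 3) := by positivity
    have h2 : (0:ℝ) < ε * R / (2 ^ (n + 3) * (2 * C n + 1)) := by positivity
    exact lt_min h1 h2
  have hδ1 : ∀ n, δ n ≤ R / 2 ^ (n + 3) := fun n => min_le_left _ _
  have hδ2 : ∀ n, δ n ≤ ε * R / (2 ^ (n + 3) * (2 * C n + 1)) := fun n => min_le_right _ _
  -- the δ's sum to at most R/4
  have hδsum : ∀ m : ℕ, ∑ i ∈ Finset.range m, δ i ≤ R / 4 := by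
    intro m
    have h1 : ∑ i ∈ Finset.range m, δ i ≤ ∑ i ∈ Finset.range m, R / 8 * (1/2:ℝ) ^ i := by
      refine Finset.sum_le_sum fun i _ => (hδ1 i).trans (le_of_eq ?_)
      rw [pow_add, one_div, inv_pow]; ring
    rw [← Finset.mul_sum] at h1
    have h2 := sum_geometric_two_le m
    nlinarith [h1, h2, hR]
  -- the Schwarz-lemma increment bound
  have step : ∀ (n : ℕ) (a v : X n), ‖a‖ ≤ R / 4 → ‖v‖ ≤ R / 4 →
      ‖f (u n (a + v)) - f (u n a)‖ ≤ (2 * C n + 1) * (2 * ‖v‖ / R) := by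
    intro n a v ha hv
    rcases eq_or_ne v 0 with rfl | hv0
    · simp
    have hvn : (0:ℝ) < ‖v‖ := norm_pos_iff.2 hv0
    set ρ : ℝ := (R / 2) / ‖v‖ with hρdef
    have hρpos : 0 < ρ := by positivity
    have hρ1 : 1 < ρ := by
      rw [hρdef, lt_div_iff₀ hvn, one_mul]
      linarith
    set g : ℂ → F := fun z => f (u n (a + z • v)) with hgdef
    have hsub : ∀ z : ℂ, z ∈ ball (0:ℂ) ρ → a + z • v ∈ ball (0 : X n) R := by
      intro z hz
      rw [mem_ball_zero_iff] at hz ⊢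
      have h1 : ‖a + z • v‖ ≤ ‖a‖ + ‖z‖ * ‖v‖ := by
        calc ‖a + z • v‖ ≤ ‖a‖ + ‖z • v‖ := norm_add_le _ _
          _ = ‖a‖ + ‖z‖ * ‖v‖ := by rw [norm_smul]
      have h2 : ‖z‖ * ‖v‖ < ρ * ‖v‖ := by
        exact mul_lt_mul_of_pos_right hz hvn
      have h3 : ρ * ‖v‖ = R / 2 := by
        rw [hρdef]; field_simp
      linarith
    have hd : DifferentiableOn ℂ g (ball (0:ℂ) ρ) := by
      intro z hz
      have h1 : AnalyticAt ℂ (fun y : X n => f (u n y)) (a + z • v) :=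
        hanal n _ (hsub z hz)
      have h2 : AnalyticAt ℂ (fun z : ℂ => a + z • v) z := by
        exact analyticAt_const.add ((analyticAt_id).smul analyticAt_const)
      have h3 : AnalyticAt ℂ ((fun y : X n => f (u n y)) ∘ (fun z : ℂ => a + z • v)) z :=
        AnalyticAt.comp (g := fun y : X n => f (u n y)) (f := fun z : ℂ => a + z • v) h1 h2
      exact (h3.differentiableAt).differentiableWithinAt
    have hmaps : Set.MapsTo g (ball (0:ℂ) ρ) (ball (g 0) (2 * C n + 1)) := by
      intro z hz
      have h1 := hC n _ (hsub z hz)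
      have h0 := hC n _ (hsub 0 (mem_ball_self hρpos))
      rw [mem_ball, dist_eq_norm]
      calc ‖g z - g 0‖ ≤ ‖g z‖ + ‖g 0‖ := norm_sub_le _ _
        _ ≤ C n + C n := add_le_add h1 h0
        _ < 2 * C n + 1 := by linarith
    have h1ball : (1:ℂ) ∈ ball (0:ℂ) ρ := by
      rw [mem_ball_zero_iff, norm_one]; exact hρ1
    have key := Complex.dist_le_div_mul_dist_of_mapsTo_ball hd (hmaps.mono_right ball_subset_closedBall) h1ball
    have hg1 : g 1 = f (u n (a + v)) := by simp [hgdef]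
    have hg0 : g 0 = f (u n a) := by simp [hgdef]
    have hd10 : dist (1:ℂ) 0 = 1 := by simp
    rw [hg1, hg0, hd10, dist_eq_norm, mul_one] at key
    have hρeq : (2 * C n + 1) / ρ = (2 * C n + 1) * (2 * ‖v‖ / R) := by
      rw [hρdef]; field_simp
    rw [hρeq] at key
    exact key
  refine ⟨δ, hδpos, ?_⟩
  rintro x ⟨m, w, hw, rfl⟩
  have hwδ : ∑ i, ‖w i‖ ≤ ∑ i : Fin m, δ i.val := by
    exact Finset.sum_le_sum fun i _ => (hw i).le
  have hsumδ : ∑ i : Fin m, δ i.val ≤ R / 4 := by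
    rw [Fin.sum_univ_eq_sum_range (fun i => δ i) m]
    exact hδsum m
  constructor
  · obtain ⟨y, hy, hny⟩ := liftSum m w
    refine ⟨m, y, ?_, hy.symm⟩
    calc ‖y‖ ≤ ∑ i, ‖w i‖ := hny
      _ ≤ R / 4 := hwδ.trans hsumδ
      _ < R := by linarith
  -- telescoping estimate
  · set g : ℕ → E := fun i => if h : i < m then u i (w ⟨i, h⟩) else 0 with hgdef
    have hgsum : ∀ l : ℕ, (hl : l ≤ m) →
        ∑ i : Fin l, u i.val (w (Fin.castLE hl i)) = ∑ i ∈ Finset.range l, g i := by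
      intro l hl
      rw [← Fin.sum_univ_eq_sum_range (fun i => g i) l]
      refine Finset.sum_congr rfl fun i _ => ?_
      have hi : (i : ℕ) < m := lt_of_lt_of_le i.isLt hl
      simp only [hgdef, dif_pos hi]
      rfl
    have key : ∀ l : ℕ, l ≤ m →
        ‖f (∑ i ∈ Finset.range l, g i)‖ ≤ ∑ i ∈ Finset.range l, ε / 2 ^ (i + 2) := by
      intro l
      induction l with
      | zero => intro _; simp [hf0]
      | succ l ih =>
        intro hl
        have hlm : l < m := hl
        have hll : l ≤ m := hlm.le
        obtain ⟨a, ha, hna⟩ := liftSum l (fun i => w (Fin.castLE hll i))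
        have has : u l a = ∑ i ∈ Finset.range l, g i := by rw [ha]; exact hgsum l hll
        have hnaR : ‖a‖ ≤ R / 4 := by
          refine hna.trans ?_
          calc ∑ i : Fin l, ‖w (Fin.castLE hll i)‖ ≤ ∑ i : Fin l, δ i.val :=
              Finset.sum_le_sum fun i _ => (hw _).le
            _ ≤ R / 4 := by
              rw [Fin.sum_univ_eq_sum_range (fun i => δ i) l]; exact hδsum l
        set w' : X l := w ⟨l, hlm⟩ with hw'def
        have hw'δ : ‖w'‖ < δ l := hw ⟨l, hlm⟩
        have hw'R : ‖w'‖ ≤ R / 4 := by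
          have h1 : δ l ≤ R / 2 ^ (l + 3) := hδ1 l
          have h2 : R / 2 ^ (l + 3) ≤ R / 4 := by
            apply div_le_div_of_nonneg_left hR.le (by norm_num)
            calc (4:ℝ) = 2 ^ 2 := by norm_num
              _ ≤ 2 ^ (l + 3) := by
                apply pow_le_pow_right₀ (by norm_num); omega
          linarith
        have hsucc : ∑ i ∈ Finset.range (l + 1), g i = u l (a + w') := by
          rw [Finset.sum_range_succ, ← has, map_add]
          congr 1
          simp only [hgdef, dif_pos hlm]
          rfl
        have hstep := step l a w' hnaR hw'R
        have hbound : (2 * C l + 1) * (2 * ‖w'‖ / R) ≤ ε / 2 ^ (l + 2) := by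
          have hd : ‖w'‖ ≤ ε * R / (2 ^ (l + 3) * (2 * C l + 1)) := hw'δ.le.trans (hδ2 l)
          have hcl := hC0 l
          rw [le_div_iff₀ (by positivity)] at hd
          rw [mul_div_assoc', div_le_div_iff₀ (by positivity) (by positivity : (0:ℝ) < 2 ^ (l + 2))]
          calc (2 * C l + 1) * (2 * ‖w'‖) * 2 ^ (l + 2)
              = ‖w'‖ * (2 ^ (l + 3) * (2 * C l + 1)) := by rw [pow_succ]; ring
            _ ≤ ε * R := hd
        calc ‖f (∑ i ∈ Finset.range (l + 1), g i)‖
            ≤ ‖f (∑ i ∈ Finset.range l, g i)‖ +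
              ‖f (∑ i ∈ Finset.range (l + 1), g i) - f (∑ i ∈ Finset.range l, g i)‖ := by
              have := norm_add_le (f (∑ i ∈ Finset.range l, g i))
                (f (∑ i ∈ Finset.range (l + 1), g i) - f (∑ i ∈ Finset.range l, g i))
              simpa using this
          _ ≤ (∑ i ∈ Finset.range l, ε / 2 ^ (i + 2)) + ε / 2 ^ (l + 2) := by
              refine add_le_add (ih hll) ?_
              rw [hsucc, ← has]
              exact hstep.trans hbound
          _ = ∑ i ∈ Finset.range (l + 1), ε / 2 ^ (i + 2) := (Finset.sum_range_succ _ _).symm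
    have hxg : ∑ i : Fin m, u i.val (w i) = ∑ i ∈ Finset.range m, g i := by
      have := hgsum m le_rfl
      simpa using this
    rw [hxg]
    refine lt_of_le_of_lt (key m le_rfl) ?_
    have h1 : ∑ i ∈ Finset.range m, ε / 2 ^ (i + 2) =
        ε / 4 * ∑ i ∈ Finset.range m, (1/2:ℝ) ^ i := by
      rw [Finset.mul_sum]
      refine Finset.sum_congr rfl fun i _ => ?_
      rw [pow_add, one_div, inv_pow]; ring
    rw [h1]
    have h2 := sum_geometric_two_le m
    nlinarith [h2, hε]
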